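/- Let τ_k ∈ Sym(n_k) satisfy d_□(λ, ĥτ_k) ≤ C·log(n_k)/n_k, and define π_1 = τ_1 and π_k = π_{k−1}[τ_k,…,τ_k] ∈ Sym(N_k) (the inflation of π_{k−1} by N_{k−1} copies of τ_k), where N_k = n_1⋯n_k. Then d_□(ĥπ_k, ĥπ_{k+1}) ≤ 4C·log(n_{k+1})/N_{k+1}. -/

import Mathlib

open MeasureTheory Set Filter Topology

/-- Rectangular distance between two measures on the plane: supremum over axis-aligned
rectangles `[a,b] × [c,d]` of the difference of their measures. -/
noncomputable def dRect (μ ν : Measure (ℝ × ℝ)) : ℝ :=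
  ⨆ r : ℝ × ℝ × ℝ × ℝ,
    |(μ (Icc r.1 r.2.1 ×ˢ Icc r.2.2.1 r.2.2.2)).toReal -
      (ν (Icc r.1 r.2.1 ×ˢ Icc r.2.2.1 r.2.2.2)).toReal|

/-- Star discrepancy: supremum over anchored rectangles `[0,x] × [0,y]`. -/
noncomputable def dStar (μ ν : Measure (ℝ × ℝ)) : ℝ :=
  ⨆ r : ℝ × ℝ,
    |(μ (Icc 0 r.1 ×ˢ Icc 0 r.2)).toReal - (ν (Icc 0 r.1 ×ˢ Icc 0 r.2)).toReal|

/-- A permuton: probability measure on the unit square with uniform marginals. -/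
def IsPermuton (μ : Measure (ℝ × ℝ)) : Prop :=
  IsProbabilityMeasure μ ∧ μ.map Prod.fst = volume.restrict (Icc 0 1) ∧
    μ.map Prod.snd = volume.restrict (Icc 0 1)

/-- The permuton associated with a permutation of `{1, …, n}` (0-indexed here):
density `n` on the union of the base squares. -/
noncomputable def hatPerm (n : ℕ) (π : Equiv.Perm (Fin n)) : Measure (ℝ × ℝ) :=
  (n : ENNReal) • volume.restrict (⋃ i : Fin n,
    Icc (((i : ℕ) : ℝ) / n) ((((i : ℕ) : ℝ) + 1) / n) ×ˢ
      Icc (((π i : ℕ) : ℝ) / n) ((((π i : ℕ) : ℝ) + 1) / n))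

/-- Empirical (uniform) measure on a finite indexed point family. -/
noncomputable def empMeasure {n : ℕ} (P : Fin n → ℝ × ℝ) : Measure (ℝ × ℝ) :=
  (n : ENNReal)⁻¹ • ∑ i, Measure.dirac (P i)

/-- The point set `{(i/n, π(i)/n) : i = 1, …, n}` associated with a permutation. -/
noncomputable def permPts (n : ℕ) (π : Equiv.Perm (Fin n)) : Fin n → ℝ × ℝ :=
  fun i => ((((i : ℕ) : ℝ) + 1) / n, (((π i : ℕ) : ℝ) + 1) / n)

/-- `D_n(μ)`: best rectangular-distance approximation of `μ` by an `n`-permutation. -/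
noncomputable def Dn (n : ℕ) (μ : Measure (ℝ × ℝ)) : ℝ :=
  ⨅ π : Equiv.Perm (Fin n), dRect μ (hatPerm n π)

/-- Inflation of a permutation: each point of σ is replaced by a copy of τ. -/
def inflate {m n : ℕ} (σ : Equiv.Perm (Fin m)) (τ : Equiv.Perm (Fin n)) :
    Equiv.Perm (Fin (m * n)) :=
  (Equiv.permCongr finProdFinEquiv) (σ.prodCongr τ)

namespace IDAux

lemma toReal_ofReal_max (x : ℝ) : (ENNReal.ofReal x).toReal = max x 0 := by
  rcases le_total x 0 with h|h
  · simp [ENNReal.ofReal_eq_zero.2 h, max_eq_right h]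
  · simp [ENNReal.toReal_ofReal h, max_eq_left h]

lemma vol_prod (a b c d : ℝ) :
    volume (Icc a b ×ˢ Icc c d) = ENNReal.ofReal (b-a) * ENNReal.ofReal (d-c) := by
  rw [show (volume : Measure (ℝ×ℝ)) = (volume : Measure ℝ).prod volume from rfl,
    Measure.prod_prod, Real.volume_Icc, Real.volume_Icc]

/-- length of `[x,y] ∩ [u,v]` (when nonneg) -/
noncomputable def seg (u v x y : ℝ) : ℝ := max (min y v - max x u) 0

lemma seg_nonneg (u v x y : ℝ) : 0 ≤ seg u v x y := le_max_right _ _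

lemma col_sep {N : ℕ} (hN : 0 < N) {j j' : ℕ} (h : j ≠ j') :
    min (((j:ℝ)+1)/N) (((j':ℝ)+1)/N) ≤ max ((j:ℝ)/N) ((j':ℝ)/N) := by
  have hN' : (0:ℝ) < N := by exact_mod_cast hN
  rcases h.lt_or_gt with h' | h'
  · have : ((j:ℝ)+1) ≤ (j':ℝ) := by exact_mod_cast h'
    calc min (((j:ℝ)+1)/N) (((j':ℝ)+1)/N) ≤ ((j:ℝ)+1)/N := min_le_left _ _
      _ ≤ (j':ℝ)/N := by gcongr
      _ ≤ _ := le_max_right _ _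
  · have : ((j':ℝ)+1) ≤ (j:ℝ) := by exact_mod_cast h'
    calc min (((j:ℝ)+1)/N) (((j':ℝ)+1)/N) ≤ ((j':ℝ)+1)/N := min_le_right _ _
      _ ≤ (j:ℝ)/N := by gcongr
      _ ≤ _ := le_max_left _ _

lemma hatPerm_rect {N : ℕ} (hN : 0 < N) (π : Equiv.Perm (Fin N)) (a b c d : ℝ) :
    (hatPerm N π (Icc a b ×ˢ Icc c d)).toReal =
      ∑ j : Fin N, (N : ℝ) *
        (seg (((j:ℕ):ℝ)/N) ((((j:ℕ):ℝ)+1)/N) a b *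
          seg (((π j:ℕ):ℝ)/N) ((((π j:ℕ):ℝ)+1)/N) c d) := by
  have hX : MeasurableSet (Icc a b ×ˢ Icc c d : Set (ℝ×ℝ)) :=
    measurableSet_Icc.prod measurableSet_Icc
  have key : hatPerm N π (Icc a b ×ˢ Icc c d) =
      (N : ENNReal) * ∑ j : Fin N,
        (ENNReal.ofReal (min b ((((j:ℕ):ℝ)+1)/N) - max a (((j:ℕ):ℝ)/N)) *
         ENNReal.ofReal (min d ((((π j:ℕ):ℝ)+1)/N) - max c (((π j:ℕ):ℝ)/N))) := by
    rw [hatPerm, Measure.smul_apply, smul_eq_mul, Measure.restrict_apply hX, inter_iUnion]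
    congr 1
    rw [measure_iUnion₀, tsum_fintype]
    · apply Finset.sum_congr rfl
      intro j _
      simp only [Set.prod_inter_prod, Set.Icc_inter_Icc]
      rw [vol_prod]
    · intro j j' hjj'
      apply measure_mono_null (Set.inter_subset_inter (inter_subset_right) (inter_subset_right))
      simp only [Set.prod_inter_prod, Set.Icc_inter_Icc]
      rw [vol_prod]
      rw [ENNReal.ofReal_eq_zero.2 (by simpa using sub_nonpos.2 (col_sep hN (by simpa [Fin.val_eq_val] using hjj')))]
      ring
    · intro j
      exact ((measurableSet_Icc.prod measurableSet_Icc).inter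
        (measurableSet_Icc.prod measurableSet_Icc)).nullMeasurableSet
  rw [key, ENNReal.toReal_mul, ENNReal.toReal_sum (by intro j _; exact ENNReal.mul_ne_top ENNReal.ofReal_ne_top ENNReal.ofReal_ne_top),
    Finset.mul_sum]
  simp [ENNReal.toReal_mul, toReal_ofReal_max, seg]

lemma seg_le {u v : ℝ} (x y : ℝ) (h : u ≤ v) : seg u v x y ≤ v - u := by
  refine max_le ?_ (by linarith)
  have h1 : min y v ≤ v := min_le_right _ _
  have h2 : u ≤ max x u := le_max_right _ _
  linarith
lemma seg_zero {x y : ℝ} (u v : ℝ) (hu : 0 ≤ u) (hv : v ≤ 1) (h : min y 1 ≤ max x 0) :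
    seg u v x y = 0 := by
  apply max_eq_right
  have h1 : min y v ≤ min y 1 := le_min (min_le_left _ _) (le_trans (min_le_right _ _) hv)
  have h2 : max x 0 ≤ max x u := max_le_max le_rfl hu
  linarith
lemma seg_full {x y : ℝ} (u v : ℝ) (hu : 0 ≤ u) (hv : v ≤ 1) (huv : u ≤ v)
    (hx : x ≤ 0) (hy : 1 ≤ y) : seg u v x y = v - u := by
  have h1 : min y v = v := min_eq_right (by linarith)
  have h2 : max x u = u := max_eq_right (by linarith)
  rw [seg, h1, h2, max_eq_left (by linarith)]
lemma lam_rect (a b c d : ℝ) :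
    ((volume.restrict (Icc 0 1 ×ˢ Icc 0 1)) (Icc a b ×ˢ Icc c d)).toReal =
      seg 0 1 a b * seg 0 1 c d := by
  rw [Measure.restrict_apply (measurableSet_Icc.prod measurableSet_Icc)]
  simp only [Set.prod_inter_prod, Set.Icc_inter_Icc]
  rw [vol_prod, ENNReal.toReal_mul, toReal_ofReal_max, toReal_ofReal_max]
  rfl
lemma min_scale {p : ℝ} (hp : 0 < p) (i v y : ℝ) :
    min y ((i+v)/p) = (i + min (p*y-i) v)/p := by
  rcases le_total y ((i+v)/p) with h|h
  · have h' : p*y - i ≤ v := by nlinarith [(le_div_iff₀ hp).1 h]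
    rw [min_eq_left h, min_eq_left h']
    field_simp
    ring
  · have h' : v ≤ p*y - i := by nlinarith [(div_le_iff₀ hp).1 h]
    rw [min_eq_right h, min_eq_right h']

lemma max_scale {p : ℝ} (hp : 0 < p) (i u x : ℝ) :
    max x ((i+u)/p) = (i + max (p*x-i) u)/p := by
  rcases le_total x ((i+u)/p) with h|h
  · have h' : p*x - i ≤ u := by nlinarith [(le_div_iff₀ hp).1 h]
    rw [max_eq_right h, max_eq_right h']
  · have h' : u ≤ p*x - i := by nlinarith [(div_le_iff₀ hp).1 h]
    rw [max_eq_left h, max_eq_left h']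
    field_simp
    ring

lemma seg_scale {p : ℝ} (hp : 0 < p) (i u v x y : ℝ) :
    seg ((i+u)/p) ((i+v)/p) x y = seg u v (p*x-i) (p*y-i) / p := by
  rw [seg, seg, min_scale hp, max_scale hp,
    show (i + min (p*y-i) v)/p - (i + max (p*x-i) u)/p
      = (min (p*y-i) v - max (p*x-i) u)/p by ring,
    show (0:ℝ) = 0/p by simp, max_div_div_right hp.le]
  simp
lemma seg_coarse {p : ℝ} (hp : 0 < p) (i x y : ℝ) :
    seg (i/p) ((i+1)/p) x y = seg 0 1 (p*x-i) (p*y-i) / p := by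
  rw [show i/p = (i+0)/p by ring, seg_scale hp]
lemma seg_fine {p q : ℝ} (hp : 0 < p) (hq : 0 < q) (i u x y : ℝ) :
    seg ((u + q*i)/(p*q)) ((u + q*i + 1)/(p*q)) x y
      = seg (u/q) ((u+1)/q) (p*x-i) (p*y-i) / p := by
  have h1 : (u + q*i)/(p*q) = (i + u/q)/p := by field_simp; ring
  have h2 : (u + q*i + 1)/(p*q) = (i + (u+1)/q)/p := by field_simp; ring
  rw [h1, h2, seg_scale hp]




lemma hat_le_one {n : ℕ} (hn : 0 < n) (τ : Equiv.Perm (Fin n)) (a b c d : ℝ) :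
    (hatPerm n τ (Icc a b ×ˢ Icc c d)).toReal ≤ 1 := by
  have hn' : (0:ℝ) < n := by exact_mod_cast hn
  rw [hatPerm_rect hn]
  have hstep : ∀ j : Fin n, (n:ℝ) *
      (seg (((j:ℕ):ℝ)/n) ((((j:ℕ):ℝ)+1)/n) a b *
        seg (((τ j:ℕ):ℝ)/n) ((((τ j:ℕ):ℝ)+1)/n) c d) ≤ (n:ℝ) * ((1/n) * (1/n)) := by
    intro j
    have h1 : seg (((j:ℕ):ℝ)/n) ((((j:ℕ):ℝ)+1)/n) a b ≤ 1/n := by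
      have := seg_le a b (show ((j:ℕ):ℝ)/n ≤ (((j:ℕ):ℝ)+1)/n by gcongr; linarith)
      calc seg (((j:ℕ):ℝ)/n) ((((j:ℕ):ℝ)+1)/n) a b ≤ (((j:ℕ):ℝ)+1)/n - ((j:ℕ):ℝ)/n := this
        _ = 1/n := by ring
    have h2 : seg (((τ j:ℕ):ℝ)/n) ((((τ j:ℕ):ℝ)+1)/n) c d ≤ 1/n := by
      have := seg_le c d (show ((τ j:ℕ):ℝ)/n ≤ (((τ j:ℕ):ℝ)+1)/n by gcongr; linarith)
      calc seg (((τ j:ℕ):ℝ)/n) ((((τ j:ℕ):ℝ)+1)/n) c d ≤ (((τ j:ℕ):ℝ)+1)/n - ((τ j:ℕ):ℝ)/n := this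
        _ = 1/n := by ring
    exact mul_le_mul_of_nonneg_left
      (mul_le_mul h1 h2 (seg_nonneg _ _ _ _) (by positivity)) hn'.le
  calc (∑ j : Fin n, (n:ℝ) * (seg (((j:ℕ):ℝ)/n) ((((j:ℕ):ℝ)+1)/n) a b *
        seg (((τ j:ℕ):ℝ)/n) ((((τ j:ℕ):ℝ)+1)/n) c d))
      ≤ ∑ _j : Fin n, (n:ℝ) * ((1/n) * (1/n)) := Finset.sum_le_sum fun j _ => hstep j
    _ = 1 := by
        rw [Finset.sum_const, Finset.card_univ, Fintype.card_fin, nsmul_eq_mul]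
        field_simp

lemma lam_le_one (a b c d : ℝ) :
    ((volume.restrict (Icc 0 1 ×ˢ Icc 0 1) : Measure (ℝ×ℝ)) (Icc a b ×ˢ Icc c d)).toReal ≤ 1 := by
  rw [lam_rect]
  have h1 : seg 0 1 a b ≤ 1 := by have := seg_le a b zero_le_one; linarith
  have h2 : seg 0 1 c d ≤ 1 := by have := seg_le c d zero_le_one; linarith
  nlinarith [seg_nonneg 0 1 a b, seg_nonneg 0 1 c d]

lemma abs_le_dRect {n : ℕ} (hn : 0 < n) (τ : Equiv.Perm (Fin n)) (A B C D : ℝ) :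
    |((volume.restrict (Icc 0 1 ×ˢ Icc 0 1) : Measure (ℝ×ℝ)) (Icc A B ×ˢ Icc C D)).toReal
        - (hatPerm n τ (Icc A B ×ˢ Icc C D)).toReal|
      ≤ dRect (volume.restrict (Icc 0 1 ×ˢ Icc 0 1)) (hatPerm n τ) := by
  have hbdd : BddAbove (Set.range fun r : ℝ × ℝ × ℝ × ℝ =>
      |((volume.restrict (Icc 0 1 ×ˢ Icc 0 1) : Measure (ℝ×ℝ))
          (Icc r.1 r.2.1 ×ˢ Icc r.2.2.1 r.2.2.2)).toReal -
        (hatPerm n τ (Icc r.1 r.2.1 ×ˢ Icc r.2.2.1 r.2.2.2)).toReal|) := by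
    refine ⟨2, ?_⟩
    rintro x ⟨⟨a, b, c, d⟩, rfl⟩
    have h1 := lam_le_one a b c d
    have h2 := hat_le_one hn τ a b c d
    have h3 : (0:ℝ) ≤ ((volume.restrict (Icc 0 1 ×ˢ Icc 0 1) : Measure (ℝ×ℝ))
        (Icc a b ×ˢ Icc c d)).toReal := ENNReal.toReal_nonneg
    have h4 : (0:ℝ) ≤ (hatPerm n τ (Icc a b ×ˢ Icc c d)).toReal := ENNReal.toReal_nonneg
    rw [abs_le]
    constructor <;> simp only <;> [linarith; linarith]
  rw [dRect]
  exact le_ciSup hbdd ((A, B, C, D) : ℝ × ℝ × ℝ × ℝ)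

lemma inflate_apply {m n : ℕ} (σ : Equiv.Perm (Fin m)) (τ : Equiv.Perm (Fin n))
    (i : Fin m) (b : Fin n) :
    inflate σ τ (finProdFinEquiv (i, b)) = finProdFinEquiv (σ i, τ b) := by
  simp [inflate, Equiv.permCongr_apply]

lemma fin_val {m n : ℕ} (i : Fin m) (b : Fin n) :
    ((finProdFinEquiv (i, b) : Fin (m*n)) : ℕ) = (b:ℕ) + n * (i:ℕ) := rfl

lemma card_filter_le_one {m : ℕ} (g : Fin m → ℕ) (hg : Function.Injective g) (x : ℝ) :
    (Finset.univ.filter fun i : Fin m => ((g i : ℕ):ℝ) < x ∧ x < ((g i : ℕ):ℝ) + 1).card ≤ 1 := by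
  classical
  refine Finset.card_le_one.2 ?_
  intro i hi j hj
  simp only [Finset.mem_filter] at hi hj
  have h1 : (g i) < (g j) + 1 := by exact_mod_cast lt_trans hi.2.1 hj.2.2
  have h2 : (g j) < (g i) + 1 := by exact_mod_cast lt_trans hj.2.1 hi.2.2
  exact hg (by omega)





lemma frac_le_one {n : ℕ} (hn' : (0:ℝ) < n) (x : Fin n) : (((x:ℕ):ℝ)+1)/n ≤ 1 := by
  rw [div_le_one hn']
  have : (x:ℕ) + 1 ≤ n := x.isLt
  exact_mod_cast this

lemma frac_mono {n : ℕ} (hn' : (0:ℝ) < n) (x : Fin n) : ((x:ℕ):ℝ)/n ≤ (((x:ℕ):ℝ)+1)/n := by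
  gcongr
  linarith

lemma sum_rearr (p : ℝ) (hp : 0 < p) {n : ℕ} (hn' : (0:ℝ) < n) (τ : Equiv.Perm (Fin n))
    (A B C D : ℝ) :
    ∑ x : Fin n, p * (n:ℝ) *
        (seg (((x:ℕ):ℝ)/n) ((((x:ℕ):ℝ)+1)/n) A B / p *
          (seg (((τ x:ℕ):ℝ)/n) ((((τ x:ℕ):ℝ)+1)/n) C D / p))
      = (∑ x : Fin n, (n:ℝ) *
          (seg (((x:ℕ):ℝ)/n) ((((x:ℕ):ℝ)+1)/n) A B *
            seg (((τ x:ℕ):ℝ)/n) ((((τ x:ℕ):ℝ)+1)/n) C D)) / p := by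
  rw [Finset.sum_div]
  refine Finset.sum_congr rfl fun x _ => ?_
  field_simp

lemma sum_full (p : ℝ) (hp : 0 < p) {n : ℕ} (hn' : (0:ℝ) < n) (τ : Equiv.Perm (Fin n))
    {A B C D : ℝ} (hA : A ≤ 0) (hB : 1 ≤ B) (hC : C ≤ 0) (hD : 1 ≤ D) :
    ∑ x : Fin n, p * (n:ℝ) *
        (seg (((x:ℕ):ℝ)/n) ((((x:ℕ):ℝ)+1)/n) A B / p *
          (seg (((τ x:ℕ):ℝ)/n) ((((τ x:ℕ):ℝ)+1)/n) C D / p)) = 1/p := by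
  have hterm : ∀ x : Fin n, p * (n:ℝ) *
      (seg (((x:ℕ):ℝ)/n) ((((x:ℕ):ℝ)+1)/n) A B / p *
        (seg (((τ x:ℕ):ℝ)/n) ((((τ x:ℕ):ℝ)+1)/n) C D / p)) = 1/(p*n) := by
    intro x
    rw [seg_full _ _ (by positivity) (frac_le_one hn' x) (frac_mono hn' x) hA hB,
      seg_full _ _ (by positivity) (frac_le_one hn' (τ x)) (frac_mono hn' (τ x)) hC hD]
    field_simp
    ring
  rw [Finset.sum_congr rfl fun x _ => hterm x, Finset.sum_const, Finset.card_univ,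
    Fintype.card_fin, nsmul_eq_mul]
  field_simp

lemma sum_zero_col (p : ℝ) {n : ℕ} (hn' : (0:ℝ) < n) (τ : Equiv.Perm (Fin n))
    {A B : ℝ} (C D : ℝ) (h : min B 1 ≤ max A 0) :
    ∑ x : Fin n, p * (n:ℝ) *
        (seg (((x:ℕ):ℝ)/n) ((((x:ℕ):ℝ)+1)/n) A B / p *
          (seg (((τ x:ℕ):ℝ)/n) ((((τ x:ℕ):ℝ)+1)/n) C D / p)) = 0 := by
  refine Finset.sum_eq_zero fun x _ => ?_
  rw [seg_zero _ _ (by positivity) (frac_le_one hn' x) h]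
  simp

lemma sum_zero_row (p : ℝ) {n : ℕ} (hn' : (0:ℝ) < n) (τ : Equiv.Perm (Fin n))
    (A B : ℝ) {C D : ℝ} (h : min D 1 ≤ max C 0) :
    ∑ x : Fin n, p * (n:ℝ) *
        (seg (((x:ℕ):ℝ)/n) ((((x:ℕ):ℝ)+1)/n) A B / p *
          (seg (((τ x:ℕ):ℝ)/n) ((((τ x:ℕ):ℝ)+1)/n) C D / p)) = 0 := by
  refine Finset.sum_eq_zero fun x _ => ?_
  rw [seg_zero _ _ (by positivity) (frac_le_one hn' (τ x)) h]
  simp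

lemma card_le_one_of {m : ℕ} (g : Fin m → ℕ) (hg : Function.Injective g) (x : ℝ)
    (s : Finset (Fin m)) (hs : ∀ i ∈ s, ((g i : ℕ):ℝ) < x ∧ x < ((g i : ℕ):ℝ) + 1) :
    s.card ≤ 1 := by
  refine Finset.card_le_one.2 ?_
  intro i hi j hj
  obtain ⟨hi1, hi2⟩ := hs i hi
  obtain ⟨hj1, hj2⟩ := hs j hj
  have h1 : (g i) < (g j) + 1 := by exact_mod_cast lt_trans hi1 hj2
  have h2 : (g j) < (g i) + 1 := by exact_mod_cast lt_trans hj1 hi2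
  exact hg (by omega)



end IDAux

theorem inflation_distance (m n : ℕ) (hm : 0 < m) (hn : 2 ≤ n) (C : ℝ) (hC : 0 < C)
    (σ : Equiv.Perm (Fin m)) (τ : Equiv.Perm (Fin n))
    (hτ : dRect (volume.restrict (Icc 0 1 ×ˢ Icc 0 1)) (hatPerm n τ) ≤
      C * Real.log n / n) :
    dRect (hatPerm m σ) (hatPerm (m * n) (inflate σ τ)) ≤
      4 * C * Real.log n / (m * n) := by
  classical
  have hn0 : 0 < n := by omega
  have hm' : (0:ℝ) < m := by exact_mod_cast hm
  have hn' : (0:ℝ) < n := by exact_mod_cast hn0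
  have hN : 0 < m * n := Nat.mul_pos hm hn0
  have hlog : (0:ℝ) ≤ Real.log n := Real.log_nonneg (by exact_mod_cast hn0)
  rw [dRect]
  refine Real.iSup_le ?_ (by positivity)
  rintro ⟨a, b, c, d⟩
  dsimp only
  rw [IDAux.hatPerm_rect hm σ a b c d, IDAux.hatPerm_rect hN (inflate σ τ) a b c d,
    ← Equiv.sum_comp finProdFinEquiv, Fintype.sum_prod_type]
  simp only [IDAux.inflate_apply, IDAux.fin_val]
  push_cast
  simp only [IDAux.seg_fine hm' hn', IDAux.seg_coarse hm']
  rw [← Finset.sum_sub_distrib]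
  refine (Finset.abs_sum_le_sum_abs _ _).trans ?_
  refine le_trans (Finset.sum_le_sum
    (g := fun i : Fin m =>
      if ((((i:ℕ):ℝ) < (m:ℝ)*a ∧ (m:ℝ)*a < ((i:ℕ):ℝ)+1) ∨
          (((i:ℕ):ℝ) < (m:ℝ)*b ∧ (m:ℝ)*b < ((i:ℕ):ℝ)+1) ∨
          ((((σ i):ℕ):ℝ) < (m:ℝ)*c ∧ (m:ℝ)*c < (((σ i):ℕ):ℝ)+1) ∨
          ((((σ i):ℕ):ℝ) < (m:ℝ)*d ∧ (m:ℝ)*d < (((σ i):ℕ):ℝ)+1))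
      then C * Real.log n / n / m else 0)
    fun i _ => ?_) ?_
  · -- per-index bound
    split_ifs with hP
    · -- partial square: use the discrepancy hypothesis
      rw [show (m:ℝ) * (IDAux.seg 0 1 ((m:ℝ)*a - ((i:ℕ):ℝ)) ((m:ℝ)*b - ((i:ℕ):ℝ)) / m *
            (IDAux.seg 0 1 ((m:ℝ)*c - (((σ i):ℕ):ℝ)) ((m:ℝ)*d - (((σ i):ℕ):ℝ)) / m))
          = IDAux.seg 0 1 ((m:ℝ)*a - ((i:ℕ):ℝ)) ((m:ℝ)*b - ((i:ℕ):ℝ)) *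
              IDAux.seg 0 1 ((m:ℝ)*c - (((σ i):ℕ):ℝ)) ((m:ℝ)*d - (((σ i):ℕ):ℝ)) / m
          from by field_simp,
        IDAux.sum_rearr (m:ℝ) hm' hn' τ _ _ _ _, div_sub_div_same, abs_div,
        abs_of_pos hm', ← IDAux.lam_rect, ← IDAux.hatPerm_rect hn0]
      gcongr
      exact (IDAux.abs_le_dRect hn0 τ _ _ _ _).trans hτ
    · -- full or empty square: exact agreement
      push_neg at hP
      obtain ⟨hP1, hP2, hP3, hP4⟩ := hP
      by_cases h1 : min ((m:ℝ)*b - ((i:ℕ):ℝ)) 1 ≤ max ((m:ℝ)*a - ((i:ℕ):ℝ)) 0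
      · rw [IDAux.seg_zero 0 1 le_rfl le_rfl h1, IDAux.sum_zero_col (m:ℝ) hn' τ _ _ h1]
        simp
      by_cases h2 : min ((m:ℝ)*d - (((σ i):ℕ):ℝ)) 1 ≤ max ((m:ℝ)*c - (((σ i):ℕ):ℝ)) 0
      · rw [IDAux.seg_zero 0 1 le_rfl le_rfl h2, IDAux.sum_zero_row (m:ℝ) hn' τ _ _ h2]
        simp
      push_neg at h1 h2
      have hma1 : max ((m:ℝ)*a - ((i:ℕ):ℝ)) 0 < 1 :=
        lt_of_lt_of_le h1 (min_le_right _ _)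
      have hmb1 : (0:ℝ) < min ((m:ℝ)*b - ((i:ℕ):ℝ)) 1 :=
        lt_of_le_of_lt (le_max_right _ _) h1
      have hmc1 : max ((m:ℝ)*c - (((σ i):ℕ):ℝ)) 0 < 1 :=
        lt_of_lt_of_le h2 (min_le_right _ _)
      have hmd1 : (0:ℝ) < min ((m:ℝ)*d - (((σ i):ℕ):ℝ)) 1 :=
        lt_of_le_of_lt (le_max_right _ _) h2
      have hA : (m:ℝ)*a - ((i:ℕ):ℝ) ≤ 0 := by
        by_contra h
        push_neg at h
        have h' := hP1 (by linarith)
        have := le_max_left ((m:ℝ)*a - ((i:ℕ):ℝ)) 0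
        linarith
      have hB : 1 ≤ (m:ℝ)*b - ((i:ℕ):ℝ) := by
        by_contra h
        push_neg at h
        have h0 : ((i:ℕ):ℝ) < (m:ℝ)*b := by
          have := min_le_left ((m:ℝ)*b - ((i:ℕ):ℝ)) 1
          linarith
        have h' := hP2 h0
        linarith
      have hC2 : (m:ℝ)*c - (((σ i):ℕ):ℝ) ≤ 0 := by
        by_contra h
        push_neg at h
        have h' := hP3 (by linarith)
        have := le_max_left ((m:ℝ)*c - (((σ i):ℕ):ℝ)) 0
        linarith
      have hD : 1 ≤ (m:ℝ)*d - (((σ i):ℕ):ℝ) := by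
        by_contra h
        push_neg at h
        have h0 : (((σ i):ℕ):ℝ) < (m:ℝ)*d := by
          have := min_le_left ((m:ℝ)*d - (((σ i):ℕ):ℝ)) 1
          linarith
        have h' := hP4 h0
        linarith
      rw [IDAux.seg_full 0 1 le_rfl le_rfl zero_le_one hA hB,
        IDAux.seg_full 0 1 le_rfl le_rfl zero_le_one hC2 hD,
        IDAux.sum_full (m:ℝ) hm' hn' τ hA hB hC2 hD,
        show (m:ℝ) * ((1-(0:ℝ))/m * ((1-(0:ℝ))/m)) = 1/m from by field_simp; norm_num,
        sub_self, abs_zero]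
  · -- counting: at most 4 partial squares
    rw [Finset.sum_ite, Finset.sum_const, Finset.sum_const_zero, add_zero, nsmul_eq_mul]
    have hcard : (Finset.univ.filter fun i : Fin m =>
        ((((i:ℕ):ℝ) < (m:ℝ)*a ∧ (m:ℝ)*a < ((i:ℕ):ℝ)+1) ∨
          (((i:ℕ):ℝ) < (m:ℝ)*b ∧ (m:ℝ)*b < ((i:ℕ):ℝ)+1) ∨
          ((((σ i):ℕ):ℝ) < (m:ℝ)*c ∧ (m:ℝ)*c < (((σ i):ℕ):ℝ)+1) ∨
          ((((σ i):ℕ):ℝ) < (m:ℝ)*d ∧ (m:ℝ)*d < (((σ i):ℕ):ℝ)+1))).card ≤ 4 := by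
      have hsub : (Finset.univ.filter fun i : Fin m =>
          ((((i:ℕ):ℝ) < (m:ℝ)*a ∧ (m:ℝ)*a < ((i:ℕ):ℝ)+1) ∨
            (((i:ℕ):ℝ) < (m:ℝ)*b ∧ (m:ℝ)*b < ((i:ℕ):ℝ)+1) ∨
            ((((σ i):ℕ):ℝ) < (m:ℝ)*c ∧ (m:ℝ)*c < (((σ i):ℕ):ℝ)+1) ∨
            ((((σ i):ℕ):ℝ) < (m:ℝ)*d ∧ (m:ℝ)*d < (((σ i):ℕ):ℝ)+1))) ⊆
          (Finset.univ.filter fun i : Fin m =>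
            (((i:ℕ):ℝ) < (m:ℝ)*a ∧ (m:ℝ)*a < ((i:ℕ):ℝ)+1)) ∪
          ((Finset.univ.filter fun i : Fin m =>
            (((i:ℕ):ℝ) < (m:ℝ)*b ∧ (m:ℝ)*b < ((i:ℕ):ℝ)+1)) ∪
          ((Finset.univ.filter fun i : Fin m =>
            ((((σ i):ℕ):ℝ) < (m:ℝ)*c ∧ (m:ℝ)*c < (((σ i):ℕ):ℝ)+1)) ∪
          (Finset.univ.filter fun i : Fin m =>
            ((((σ i):ℕ):ℝ) < (m:ℝ)*d ∧ (m:ℝ)*d < (((σ i):ℕ):ℝ)+1)))) := by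
        intro i hi
        simp only [Finset.mem_filter, Finset.mem_union, Finset.mem_univ, true_and] at hi ⊢
        tauto
      refine (Finset.card_le_card hsub).trans ?_
      have c1 := IDAux.card_le_one_of (fun i : Fin m => (i:ℕ)) Fin.val_injective ((m:ℝ)*a)
        (Finset.univ.filter fun i : Fin m => (((i:ℕ):ℝ) < (m:ℝ)*a ∧ (m:ℝ)*a < ((i:ℕ):ℝ)+1))
        (fun i hi => (Finset.mem_filter.1 hi).2)
      have c2 := IDAux.card_le_one_of (fun i : Fin m => (i:ℕ)) Fin.val_injective ((m:ℝ)*b)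
        (Finset.univ.filter fun i : Fin m => (((i:ℕ):ℝ) < (m:ℝ)*b ∧ (m:ℝ)*b < ((i:ℕ):ℝ)+1))
        (fun i hi => (Finset.mem_filter.1 hi).2)
      have c3 := IDAux.card_le_one_of (fun i : Fin m => ((σ i):ℕ))
        (Fin.val_injective.comp σ.injective) ((m:ℝ)*c)
        (Finset.univ.filter fun i : Fin m =>
          ((((σ i):ℕ):ℝ) < (m:ℝ)*c ∧ (m:ℝ)*c < (((σ i):ℕ):ℝ)+1))
        (fun i hi => (Finset.mem_filter.1 hi).2)
      have c4 := IDAux.card_le_one_of (fun i : Fin m => ((σ i):ℕ))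
        (Fin.val_injective.comp σ.injective) ((m:ℝ)*d)
        (Finset.univ.filter fun i : Fin m =>
          ((((σ i):ℕ):ℝ) < (m:ℝ)*d ∧ (m:ℝ)*d < (((σ i):ℕ):ℝ)+1))
        (fun i hi => (Finset.mem_filter.1 hi).2)
      have u1 := Finset.card_union_le
        (Finset.univ.filter fun i : Fin m => (((i:ℕ):ℝ) < (m:ℝ)*a ∧ (m:ℝ)*a < ((i:ℕ):ℝ)+1))
        ((Finset.univ.filter fun i : Fin m =>
            (((i:ℕ):ℝ) < (m:ℝ)*b ∧ (m:ℝ)*b < ((i:ℕ):ℝ)+1)) ∪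
          ((Finset.univ.filter fun i : Fin m =>
            ((((σ i):ℕ):ℝ) < (m:ℝ)*c ∧ (m:ℝ)*c < (((σ i):ℕ):ℝ)+1)) ∪
          (Finset.univ.filter fun i : Fin m =>
            ((((σ i):ℕ):ℝ) < (m:ℝ)*d ∧ (m:ℝ)*d < (((σ i):ℕ):ℝ)+1))))
      have u2 := Finset.card_union_le
        (Finset.univ.filter fun i : Fin m =>
          (((i:ℕ):ℝ) < (m:ℝ)*b ∧ (m:ℝ)*b < ((i:ℕ):ℝ)+1))
        ((Finset.univ.filter fun i : Fin m =>
            ((((σ i):ℕ):ℝ) < (m:ℝ)*c ∧ (m:ℝ)*c < (((σ i):ℕ):ℝ)+1)) ∪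
          (Finset.univ.filter fun i : Fin m =>
            ((((σ i):ℕ):ℝ) < (m:ℝ)*d ∧ (m:ℝ)*d < (((σ i):ℕ):ℝ)+1)))
      have u3 := Finset.card_union_le
        (Finset.univ.filter fun i : Fin m =>
          ((((σ i):ℕ):ℝ) < (m:ℝ)*c ∧ (m:ℝ)*c < (((σ i):ℕ):ℝ)+1))
        (Finset.univ.filter fun i : Fin m =>
          ((((σ i):ℕ):ℝ) < (m:ℝ)*d ∧ (m:ℝ)*d < (((σ i):ℕ):ℝ)+1))
      omega
    have hcard' : ((Finset.univ.filter fun i : Fin m =>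
        ((((i:ℕ):ℝ) < (m:ℝ)*a ∧ (m:ℝ)*a < ((i:ℕ):ℝ)+1) ∨
          (((i:ℕ):ℝ) < (m:ℝ)*b ∧ (m:ℝ)*b < ((i:ℕ):ℝ)+1) ∨
          ((((σ i):ℕ):ℝ) < (m:ℝ)*c ∧ (m:ℝ)*c < (((σ i):ℕ):ℝ)+1) ∨
          ((((σ i):ℕ):ℝ) < (m:ℝ)*d ∧ (m:ℝ)*d < (((σ i):ℕ):ℝ)+1))).card : ℝ) ≤ 4 := by
      exact_mod_cast hcard
    have ht : (0:ℝ) ≤ C * Real.log n / n / m := by positivity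
    calc ((Finset.univ.filter _).card : ℝ) * (C * Real.log n / n / m)
        ≤ 4 * (C * Real.log n / n / m) := by exact mul_le_mul_of_nonneg_right hcard' ht
      _ = 4 * C * Real.log n / (m * n) := by field_simp
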